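/- Theorem 1 (case k = n): Let n, l, d, s, m be positive integers with s < n, d ≤ n, and m ∣ l. Then a gradient coding scheme with parameters (n, n, l, d, s, m) exists if and only if d ≥ s + m. -/

import Mathlib

/-- A gradient coding scheme with parameters `(n, k, l, d, s, m)`:
assignment sets `S i ⊆ Fin k` of size at most `d`; linear encoding maps
`f i : (ℝ^l)^k →ₗ ℝ^(l/m)` depending only on the coordinates in `S i`;
and for every set `F` of `n - s` workers a recovery map `r` reconstructing
the sum `∑ j, g j` from the outputs of the workers in `F`. -/
def IsGradientCodingScheme (n k l d s m : ℕ) : Prop :=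
  ∃ (S : Fin n → Finset (Fin k))
    (f : Fin n → ((Fin k → Fin l → ℝ) →ₗ[ℝ] (Fin (l / m) → ℝ))),
    (∀ i, (S i).card ≤ d) ∧
    (∀ i (g g' : Fin k → Fin l → ℝ), (∀ j ∈ S i, g j = g' j) → f i g = f i g') ∧
    (∀ F : Finset (Fin n), F.card = n - s →
      ∃ r : (F → Fin (l / m) → ℝ) → (Fin l → ℝ),
        ∀ g : Fin k → Fin l → ℝ, r (fun i => f i.1 g) = ∑ j : Fin k, g j)

open Polynomial
open scoped Fin.NatCast

noncomputable section GC
variable (n s m : ℕ)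

/-- evaluation points -/
def gcA (i : Fin (n+1)) : ℝ := ((i : ℕ) : ℝ) + 1

lemma gcA_inj : Function.Injective (gcA n) := by
  intro i j h
  simpa [gcA, Fin.ext_iff] using h

lemma gcA_ne_zero (i : Fin (n+1)) : gcA n i ≠ 0 := by
  have : (0:ℝ) ≤ ((i:ℕ):ℝ) := by positivity
  simp only [gcA]; nlinarith

/-- set of workers knowing data j -/
def gcW (j : Fin (n+1)) : Finset (Fin (n+1)) :=
  (Finset.range (s+m)).image (fun t : ℕ => j + (t : Fin (n+1)))

lemma gcW_card (hsm : s + m ≤ n + 1) (j : Fin (n+1)) : (gcW n s m j).card = s + m := by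
  rw [gcW, Finset.card_image_of_injOn, Finset.card_range]
  intro t1 h1 t2 h2 h
  simp only [Finset.coe_range, Set.mem_Iio] at h1 h2
  have := add_left_cancel h
  have e1 : ((t1 : Fin (n+1)) : ℕ) = t1 := Fin.val_cast_of_lt (by omega)
  have e2 : ((t2 : Fin (n+1)) : ℕ) = t2 := Fin.val_cast_of_lt (by omega)
  rw [← e1, ← e2, this]

def gcS (i : Fin (n+1)) : Finset (Fin (n+1)) :=
  Finset.univ.filter (fun j => i ∈ gcW n s m j)

lemma gcS_card (i : Fin (n+1)) : (gcS n s m i).card ≤ s + m := by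
  have : gcS n s m i ⊆ (Finset.range (s+m)).image (fun t : ℕ => i - (t : Fin (n+1))) := by
    intro j hj
    simp only [gcS, gcW, Finset.mem_filter, Finset.mem_image, Finset.mem_range] at hj ⊢
    obtain ⟨-, t, ht, hji⟩ := hj
    exact ⟨t, ht, by rw [← hji]; abel⟩
  calc (gcS n s m i).card ≤ _ := Finset.card_le_card this
    _ ≤ (Finset.range (s+m)).card := Finset.card_image_le
    _ = s + m := Finset.card_range _

/-- vanishing polynomial on workers not knowing j -/
def gcq (j : Fin (n+1)) : Polynomial ℝ :=
  ∏ i ∈ (Finset.univ \ gcW n s m j), (X - C (gcA n i))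

lemma gcq_natDegree (hsm : s + m ≤ n + 1) (j : Fin (n+1)) :
    (gcq n s m j).natDegree ≤ n + 1 - (s + m) := by
  calc (gcq n s m j).natDegree ≤ ∑ i ∈ (Finset.univ \ gcW n s m j), (X - C (gcA n i)).natDegree := by
        rw [gcq]; exact natDegree_prod_le _ _
    _ = (Finset.univ \ gcW n s m j).card := by simp [natDegree_X_sub_C]
    _ = n + 1 - (s + m) := by
        rw [Finset.card_sdiff_of_subset (Finset.subset_univ _), gcW_card n s m hsm, Finset.card_univ,
          Fintype.card_fin]

lemma gcq_const_ne (j : Fin (n+1)) : (gcq n s m j).coeff 0 ≠ 0 := by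
  rw [coeff_zero_eq_eval_zero, gcq, eval_prod]
  refine Finset.prod_ne_zero_iff.2 fun i _ => ?_
  simpa using (gcA_ne_zero n i)

lemma gcq_eval_zero {j i : Fin (n+1)} (hi : i ∉ gcW n s m j) :
    (gcq n s m j).eval (gcA n i) = 0 := by
  rw [gcq, eval_prod]
  exact Finset.prod_eq_zero (Finset.mem_sdiff.2 ⟨Finset.mem_univ _, hi⟩) (by simp)

/-- the encoding polynomial for data j, chunk t -/
def gcp (j : Fin (n+1)) (t : ℕ) : Polynomial ℝ :=
  gcq n s m j * PowerSeries.trunc m (((gcq n s m j : Polynomial ℝ) : PowerSeries ℝ)⁻¹ * PowerSeries.X ^ t)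

lemma gcp_coeff (hm : 0 < m) (j : Fin (n+1)) {t r : ℕ} (hr : r < m) :
    (gcp n s m j t).coeff r = if r = t then 1 else 0 := by
  have key : (gcp n s m j t).coeff r
      = PowerSeries.coeff r (((gcq n s m j : Polynomial ℝ) : PowerSeries ℝ) *
        (((gcq n s m j : Polynomial ℝ) : PowerSeries ℝ)⁻¹ * PowerSeries.X ^ t)) := by
    rw [gcp, Polynomial.coeff_mul, PowerSeries.coeff_mul]
    refine Finset.sum_congr rfl fun x hx => ?_
    rw [Finset.HasAntidiagonal.mem_antidiagonal] at hx
    rw [PowerSeries.coeff_trunc, Polynomial.coeff_coe, if_pos (by omega)]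
  rw [key, ← mul_assoc, PowerSeries.mul_inv_cancel _ (by
      rw [Polynomial.constantCoeff_coe]; exact gcq_const_ne n s m j), one_mul, PowerSeries.coeff_X_pow]

lemma gcp_natDegree (hm : 0 < m) (hsm : s + m ≤ n + 1) (j : Fin (n+1)) (t : ℕ) :
    (gcp n s m j t).natDegree ≤ n - s := by
  have h1 := gcq_natDegree n s m hsm j
  have h2 : (PowerSeries.trunc m (((gcq n s m j : Polynomial ℝ) : PowerSeries ℝ)⁻¹ *
      PowerSeries.X ^ t)).natDegree < m := by
    have := PowerSeries.degree_trunc_lt ((((gcq n s m j : Polynomial ℝ) : PowerSeries ℝ))⁻¹ *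
      PowerSeries.X ^ t) m
    rcases eq_or_ne (PowerSeries.trunc m (((gcq n s m j : Polynomial ℝ) : PowerSeries ℝ)⁻¹ *
      PowerSeries.X ^ t)) 0 with h | h
    · rw [h]; simpa using hm
    · exact (natDegree_lt_iff_degree_lt h).2 this
  calc (gcp n s m j t).natDegree ≤ _ := natDegree_mul_le (p := gcq n s m j)
    _ ≤ (n + 1 - (s+m)) + (m-1) := by omega
    _ ≤ n - s := by omega

lemma gcp_eval_zero {j i : Fin (n+1)} (hi : i ∉ gcW n s m j) (t : ℕ) :
    (gcp n s m j t).eval (gcA n i) = 0 := by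
  rw [gcp, eval_mul, gcq_eval_zero n s m hi, zero_mul]

def gcIdx (l : ℕ) (hml : m ∣ l) (t : Fin m) (v : Fin (l/m)) : Fin l :=
  ⟨t.val * (l/m) + v.val, by
    have h1 : (t.val + 1) * (l/m) ≤ m * (l/m) := Nat.mul_le_mul_right _ t.isLt
    have h2 : m * (l/m) = l := Nat.mul_div_cancel' hml
    have h3 := v.isLt
    have h4 : (t.val+1) * (l/m) = t.val * (l/m) + l/m := by ring
    omega⟩

def gcF (l : ℕ) (hml : m ∣ l) (i : Fin (n+1)) :
    (Fin (n+1) → Fin l → ℝ) →ₗ[ℝ] (Fin (l/m) → ℝ) where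
  toFun g := fun v => ∑ j, ∑ t : Fin m,
    (gcp n s m j t.val).eval (gcA n i) * g j (gcIdx m l hml t v)
  map_add' g g' := by funext v; simp [mul_add, Finset.sum_add_distrib]
  map_smul' c g := by
    funext v
    simp only [Pi.smul_apply, smul_eq_mul, RingHom.id_apply, Finset.mul_sum]
    exact Finset.sum_congr rfl fun j _ => Finset.sum_congr rfl fun t _ => by ring

lemma gcF_support (l : ℕ) (hml : m ∣ l) (i : Fin (n+1)) (g g' : Fin (n+1) → Fin l → ℝ)
    (h : ∀ j ∈ gcS n s m i, g j = g' j) : gcF n s m l hml i g = gcF n s m l hml i g' := by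
  have : ∀ g : Fin (n+1) → Fin l → ℝ, gcF n s m l hml i g = fun v => ∑ j, ∑ t : Fin m,
      (gcp n s m j t.val).eval (gcA n i) * g j (gcIdx m l hml t v) := fun _ => rfl
  rw [this, this]
  funext v
  refine Finset.sum_congr rfl fun j _ => Finset.sum_congr rfl fun t _ => ?_
  by_cases hj : i ∈ gcW n s m j
  · rw [h j (by simp [gcS, hj])]
  · simp [gcp_eval_zero n s m hj]

lemma gc_kernel (l : ℕ) (hm : 0 < m) (hl : 0 < l) (hsm : s + m ≤ n + 1) (hs : s ≤ n)
    (hml : m ∣ l) (F : Finset (Fin (n+1))) (hF : F.card = n + 1 - s)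
    (g : Fin (n+1) → Fin l → ℝ) (hg : ∀ i ∈ F, gcF n s m l hml i g = 0) :
    ∑ j, g j = 0 := by
  funext c
  have hq : 0 < l / m := Nat.div_pos (Nat.le_of_dvd hl hml) hm
  have hmq : m * (l/m) = l := Nat.mul_div_cancel' hml
  set t : Fin m := ⟨c.val / (l/m), by
    have hmq2 : (l/m) * m = l := by rw [mul_comm]; exact hmq
    rw [Nat.div_lt_iff_lt_mul hq]
    omega⟩ with ht
  set v : Fin (l/m) := ⟨c.val % (l/m), Nat.mod_lt _ hq⟩ with hv
  have hc : c = gcIdx m l hml t v := Fin.ext (by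
    simp only [gcIdx, ht, hv]
    exact (Nat.div_add_mod' c.val (l/m)).symm)
  set P : Polynomial ℝ :=
    ∑ j : Fin (n+1), ∑ t' : Fin m, C (g j (gcIdx m l hml t' v)) * gcp n s m j t'.val with hP
  have hPdeg : P.natDegree ≤ n - s := by
    refine natDegree_sum_le_of_forall_le _ _ fun j _ => ?_
    refine natDegree_sum_le_of_forall_le _ _ fun t' _ => ?_
    exact (natDegree_C_mul_le _ _).trans (gcp_natDegree n s m hm hsm j t'.val)
  have hPeval : ∀ x ∈ F.image (gcA n), P.eval x = 0 := by
    intro x hx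
    obtain ⟨i, hi, rfl⟩ := Finset.mem_image.mp hx
    have h0 := congrFun (hg i hi) v
    simp only [gcF, LinearMap.coe_mk, AddHom.coe_mk, Pi.zero_apply] at h0
    rw [hP]
    simp only [eval_finset_sum, eval_mul, eval_C]
    rw [← h0]
    exact Finset.sum_congr rfl fun j _ => Finset.sum_congr rfl fun t' _ => mul_comm _ _
  have hP0 : P = 0 := by
    refine eq_zero_of_natDegree_lt_card_of_eval_eq_zero' P (F.image (gcA n)) hPeval ?_
    rw [Finset.card_image_of_injOn ((gcA_inj n).injOn), hF]
    omega
  have hkey : ∀ j : Fin (n+1),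
      ∑ t' : Fin m, g j (gcIdx m l hml t' v) * (gcp n s m j t'.val).coeff t.val
        = g j (gcIdx m l hml t v) := by
    intro j
    rw [Finset.sum_eq_single t]
    · rw [gcp_coeff n s m hm j t.isLt, if_pos rfl, mul_one]
    · intro t' _ hne
      rw [gcp_coeff n s m hm j t.isLt,
        if_neg (fun hh => hne (Fin.ext hh.symm)), mul_zero]
    · simp
  have hcf := congrArg (fun p : Polynomial ℝ => p.coeff t.val) hP0
  simp only [hP, finset_sum_coeff, coeff_C_mul, coeff_zero] at hcf
  rw [Finset.sum_apply, hc]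
  simp only [Pi.zero_apply]
  rw [← hcf]
  exact (Finset.sum_congr rfl fun j _ => (hkey j).symm)

end GC

lemma gc_exists (n l d s m : ℕ) (hl : 0 < l) (hm : 0 < m) (hsn : s < n) (hml : m ∣ l)
    (hsmd : s + m ≤ d) (hsmn : s + m ≤ n) :
    IsGradientCodingScheme n n l d s m := by
  classical
  obtain ⟨n', rfl⟩ : ∃ n', n = n' + 1 := ⟨n - 1, by omega⟩
  refine ⟨gcS n' s m, gcF n' s m l hml, ?_, ?_, ?_⟩
  · exact fun i => (gcS_card n' s m i).trans hsmd
  · exact fun i g g' h => gcF_support n' s m l hml i g g' h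
  · intro F hF
    refine ⟨fun y => if h : ∃ g : Fin (n'+1) → Fin l → ℝ,
        (fun i : F => gcF n' s m l hml i.1 g) = y then ∑ j, h.choose j else 0, ?_⟩
    intro g
    have hex : ∃ g' : Fin (n'+1) → Fin l → ℝ,
        (fun i : F => gcF n' s m l hml i.1 g') = (fun i : F => gcF n' s m l hml i.1 g) :=
      ⟨g, rfl⟩
    simp only [dif_pos hex]
    have hspec := hex.choose_spec
    have hker : ∀ i ∈ F, gcF n' s m l hml i (hex.choose - g) = 0 := by
      intro i hi
      have h1 := congrFun hspec (⟨i, hi⟩ : F)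
      rw [map_sub, h1, sub_self]
    have hsum := gc_kernel n' s m l hm hl (by omega) (by omega) hml F (by omega)
      (hex.choose - g) hker
    have h2 : ∑ j, hex.choose j - ∑ j, g j = 0 := by
      rw [← Finset.sum_sub_distrib]
      exact hsum
    exact sub_eq_zero.mp h2

lemma gc_forward (n l d s m : ℕ) (hn : 0 < n) (hl : 0 < l) (hm : 0 < m) (hsn : s < n)
    (hml : m ∣ l) (h : IsGradientCodingScheme n n l d s m) : s + m ≤ d := by
  classical
  obtain ⟨S, f, hcard, hdep, hrec⟩ := h
  have hq : 0 < l / m := Nat.div_pos (Nat.le_of_dvd hl hml) hm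
  have hmq : m * (l/m) = l := Nat.mul_div_cancel' hml
  have hsum1 : ∀ (j : Fin n) (x : Fin l → ℝ),
      ∑ j' : Fin n, (Pi.single j x : Fin n → Fin l → ℝ) j' = x := by
    intro j x
    rw [Finset.sum_eq_single j]
    · exact Pi.single_eq_same (M := fun _ : Fin n => Fin l → ℝ) j x
    · exact fun b _ hb => Pi.single_eq_of_ne (M := fun _ : Fin n => Fin l → ℝ) hb x
    · simp
  have hstep : ∀ j : Fin n, s + m ≤ (Finset.univ.filter (fun i => j ∈ S i)).card := by
    intro j
    by_contra hlt
    push_neg at hlt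
    set A := Finset.univ.filter (fun i : Fin n => j ∈ S i) with hA
    obtain ⟨D, hDA, hDcard⟩ := Finset.exists_subset_card_eq (s := A) (n := min s A.card) (min_le_right _ _)
    obtain ⟨F, hFsub, hFcard⟩ := Finset.exists_subset_card_eq (s := Finset.univ \ D) (n := n - s) (by
      rw [Finset.card_sdiff_of_subset (Finset.subset_univ _), Finset.card_univ, Fintype.card_fin]
      omega)
    obtain ⟨r, hr⟩ := hrec F hFcard
    set Φ : (Fin l → ℝ) →ₗ[ℝ] ((F ∩ A : Finset (Fin n)) → Fin (l/m) → ℝ) :=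
      LinearMap.pi (fun i => (f i.1).comp (LinearMap.single ℝ (fun _ : Fin n => Fin l → ℝ) j))
      with hΦ
    have hinj : Function.Injective Φ := by
      intro x y hxy
      have hgg : ∀ i ∈ F, f i (Pi.single j x) = f i (Pi.single j y) := by
        intro i hiF
        by_cases hiA : i ∈ A
        · exact congrFun hxy ⟨i, Finset.mem_inter.2 ⟨hiF, hiA⟩⟩
        · refine hdep i _ _ fun j' hj' => ?_
          have hne : j' ≠ j := by rintro rfl; exact hiA (by simp [hA, hj'])
          rw [Pi.single_eq_of_ne hne, Pi.single_eq_of_ne hne]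
      have h1 := hr (Pi.single j x)
      have h2 := hr (Pi.single j y)
      have heq : (fun i : F => f i.1 (Pi.single j x)) = (fun i : F => f i.1 (Pi.single j y)) :=
        funext fun i => hgg i.1 i.2
      calc x = ∑ j' : Fin n, (Pi.single j x : Fin n → Fin l → ℝ) j' := (hsum1 j x).symm
        _ = r (fun i : F => f i.1 (Pi.single j x)) := (hr (Pi.single j x)).symm
        _ = r (fun i : F => f i.1 (Pi.single j y)) := by rw [heq]
        _ = ∑ j' : Fin n, (Pi.single j y : Fin n → Fin l → ℝ) j' := hr (Pi.single j y)
        _ = y := hsum1 j y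
    have hrank := LinearMap.finrank_le_finrank_of_injective hinj
    rw [Module.finrank_fin_fun] at hrank
    have hcod : Module.finrank ℝ ((F ∩ A : Finset (Fin n)) → Fin (l/m) → ℝ)
        = (F ∩ A).card * (l/m) := by
      rw [Module.finrank_pi_fintype]
      simp [Module.finrank_fin_fun, Finset.card_univ, mul_comm]
    rw [hcod] at hrank
    -- l ≤ card * (l/m), so m ≤ card
    have hmle : m ≤ (F ∩ A).card := by
      refine Nat.le_of_mul_le_mul_right ?_ hq
      omega
    -- but card < m
    have hsmall : (F ∩ A).card < m := by
      have hsub : F ∩ A ⊆ A \ D := by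
        intro i hi
        rw [Finset.mem_inter] at hi
        rw [Finset.mem_sdiff]
        exact ⟨hi.2, (Finset.mem_sdiff.mp (hFsub hi.1)).2⟩
      have := Finset.card_le_card hsub
      rw [Finset.card_sdiff_of_subset hDA] at this
      omega
    omega
  have hdouble : ∑ j : Fin n, (Finset.univ.filter (fun i => j ∈ S i)).card
      = ∑ i : Fin n, (S i).card := by
    simp only [Finset.card_filter]
    rw [Finset.sum_comm]
    refine Finset.sum_congr rfl fun i _ => ?_
    rw [Finset.sum_ite_mem, Finset.univ_inter, Finset.sum_const, smul_eq_mul, mul_one]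
  have h1 : n * (s + m) ≤ ∑ j : Fin n, (Finset.univ.filter (fun i => j ∈ S i)).card := by
    calc n * (s + m) = ∑ _j : Fin n, (s + m) := by
          rw [Finset.sum_const, Finset.card_univ, Fintype.card_fin, smul_eq_mul]
      _ ≤ _ := Finset.sum_le_sum fun j _ => hstep j
  have h2 : ∑ i : Fin n, (S i).card ≤ n * d := by
    calc ∑ i : Fin n, (S i).card ≤ ∑ _i : Fin n, d := Finset.sum_le_sum fun i _ => hcard i
      _ = n * d := by rw [Finset.sum_const, Finset.card_univ, Fintype.card_fin, smul_eq_mul]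
  have := h1.trans (le_of_eq hdouble) |>.trans h2
  exact Nat.le_of_mul_le_mul_left this hn

/-- Theorem 1 (case `k = n`): a gradient coding scheme with parameters
`(n, n, l, d, s, m)` exists if and only if `d ≥ s + m`. -/
theorem gradient_coding_tradeoff
    (n l d s m : ℕ) (hn : 0 < n) (hl : 0 < l) (hd : 0 < d)
    (hs : 0 < s) (hm : 0 < m) (hsn : s < n) (hdn : d ≤ n) (hml : m ∣ l) :
    IsGradientCodingScheme n n l d s m ↔ s + m ≤ d := by
  constructor
  · exact gc_forward n l d s m hn hl hm hsn hml
  · intro h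
    exact gc_exists n l d s m hl hm hsn hml h (h.trans hdn)
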